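/- The number of covering relations (edges of the Hasse diagram) of the poset D*(l_d) of duplicative forests above the d-ladder equals c(d), where c(0) = 0 and c(d) = c(d-1) + b(d-1) + 2 c(d-1) b(d-1), with b(0) = 1 and b(n) = b(n-1) + b(n-1)^2. The first values of c are 0, 0, 1, 7, 97, 8287. -/

import Mathlib

mutual
  /-- A duplicative tree: a node colored white (`false`) or black (`true`) with a forest of children. -/
  inductive DTree : Type
    | node : Bool → DForest → DTree
  /-- A duplicative forest: a finite sequence of duplicative trees. -/
  inductive DForest : Type
    | nil : DForest
    | cons : DTree → DForest → DForest
end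

def DForest.append : DForest → DForest → DForest
  | .nil, g => g
  | .cons t f, g => .cons t (f.append g)

mutual
  /-- One duplication step inside a tree. -/
  inductive TStep : DTree → DTree → Prop
    | dup (c : DForest) : TStep (.node false c) (.node true (c.append c))
    | congr (b : Bool) {c c' : DForest} : FStep c c' → TStep (.node b c) (.node b c')
  /-- One duplication step inside a forest. -/
  inductive FStep : DForest → DForest → Prop
    | head {t t' : DTree} (f : DForest) : TStep t t' → FStep (.cons t f) (.cons t' f)
    | tail (t : DTree) {f f' : DForest} : FStep f f' → FStep (.cons t f) (.cons t f')
end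

/-- Duplication order on forests. -/
def FLe : DForest → DForest → Prop := Relation.ReflTransGen FStep

mutual
  /-- Number of black nodes of a tree. -/
  def DTree.black : DTree → ℕ
    | .node b c => (cond b 1 0) + DForest.black c
  /-- Number of black nodes of a forest. -/
  def DForest.black : DForest → ℕ
    | .nil => 0
    | .cons t f => DTree.black t + DForest.black f
end

/-- The d-ladder. -/
def ladder : ℕ → DForest
  | 0 => .nil
  | d + 1 => .cons (.node false (ladder d)) .nil

/-- b(0) = 1, b(n) = b(n-1) + b(n-1)², the cardinality of D*(l_d). -/
def seqB : ℕ → ℕ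
  | 0 => 1
  | n + 1 => seqB n + (seqB n) ^ 2

/-- c(0) = 0, c(d) = c(d-1) + b(d-1) + 2 c(d-1) b(d-1). -/
def seqC : ℕ → ℕ
  | 0 => 0
  | d + 1 => seqC d + seqB d + 2 * seqC d * seqB d


deriving instance DecidableEq for DTree, DForest

namespace DForest

def len : DForest → ℕ
  | .nil => 0
  | .cons _ f => 1 + len f

theorem black_append : ∀ (f g : DForest), (f.append g).black = f.black + g.black
  | .nil, g => by simp [DForest.append, DForest.black]
  | .cons t f, g => by simp [DForest.append, DForest.black, black_append f g]; ring

theorem len_append : ∀ (f g : DForest), (f.append g).len = f.len + g.len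
  | .nil, g => by simp [DForest.append, len]
  | .cons t f, g => by simp [DForest.append, len, len_append f g]; ring

theorem append_inj : ∀ {f f' : DForest} (g g' : DForest), f.append g = f'.append g' →
    f.len = f'.len → f = f' ∧ g = g'
  | .nil, .nil, g, g', h, hl => ⟨rfl, h⟩
  | .nil, .cons t' f', g, g', h, hl => by simp [len] at hl; omega
  | .cons t f, .nil, g, g', h, hl => by simp [len] at hl
  | .cons t f, .cons t' f', g, g', h, hl => by
      simp only [DForest.append, DForest.cons.injEq] at h
      simp only [len] at hl
      obtain ⟨h1, h2⟩ := append_inj g g' h.2 (by omega)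
      exact ⟨by rw [h.1, h1], h2⟩

end DForest

mutual
theorem TStep.black_lt : ∀ {t t' : DTree}, TStep t t' → t.black < t'.black
  | _, _, .dup c => by
      simp [DTree.black, DForest.black_append]; omega
  | _, _, .congr b h => by
      have := h.black_lt
      simp [DTree.black]; omega
theorem FStep.black_lt : ∀ {f f' : DForest}, FStep f f' → f.black < f'.black
  | _, _, .head f h => by
      have := h.black_lt
      simp [DForest.black]; omega
  | _, _, .tail t h => by
      have := h.black_lt
      simp [DForest.black]; omega
end

theorem FLe.black_le {f g : DForest} (h : FLe f g) : f.black ≤ g.black := by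
  induction h with
  | refl => exact le_refl _
  | tail _ h ih => exact ih.trans h.black_lt.le

theorem FLe.black_lt {f g : DForest} (h : FLe f g) (hne : f ≠ g) : f.black < g.black := by
  rcases Relation.reflTransGen_iff_eq_or_transGen.mp h with rfl | h2
  · exact absurd rfl hne
  · clear h hne; induction h2 with
    | single h => exact h.black_lt
    | tail _ h ih => exact ih.trans h.black_lt

theorem FLe.antisymm {f g : DForest} (h : FLe f g) (h' : FLe g f) : f = g := by
  by_contra hne
  have := h.black_lt hne
  have := h'.black_le
  omega

theorem FStep.len_eq : ∀ {f f' : DForest}, FStep f f' → f.len = f'.len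
  | _, _, .head f h => by simp [DForest.len]
  | _, _, .tail t h => by simp [DForest.len, h.len_eq]

theorem FLe.len_eq {f g : DForest} (h : FLe f g) : f.len = g.len := by
  induction h with
  | refl => rfl
  | tail _ h ih => exact ih.trans h.len_eq

theorem FStep.nil_elim {x : DForest} (h : FStep .nil x) : False := nomatch h

theorem fstep_cons_inv : ∀ {t : DTree} {f x : DForest}, FStep (.cons t f) x →
    (∃ t', TStep t t' ∧ x = .cons t' f) ∨ (∃ f', FStep f f' ∧ x = .cons t f')
  | _, _, _, .head _ h => .inl ⟨_, h, rfl⟩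
  | _, _, _, .tail _ h => .inr ⟨_, h, rfl⟩

theorem tstep_inv : ∀ {b : Bool} {c : DForest} {x : DTree}, TStep (.node b c) x →
    (b = false ∧ x = .node true (c.append c)) ∨ (∃ c', FStep c c' ∧ x = .node b c')
  | _, _, _, .dup c => .inl ⟨rfl, rfl⟩
  | _, _, _, .congr _ h => .inr ⟨_, h, rfl⟩

theorem FStep.append_left : ∀ {f f' : DForest} (g : DForest), FStep f f' →
    FStep (f.append g) (f'.append g)
  | _, _, g, .head _ h => .head _ h
  | _, _, g, .tail t h => .tail t (h.append_left g)

theorem FStep.append_right : ∀ (f : DForest) {g g' : DForest}, FStep g g' →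
    FStep (f.append g) (f.append g')
  | .nil, _, _, h => h
  | .cons t f, _, _, h => .tail t (FStep.append_right f h)

theorem fstep_append_inv : ∀ {f g x : DForest}, FStep (f.append g) x →
    (∃ f', FStep f f' ∧ x = f'.append g) ∨ (∃ g', FStep g g' ∧ x = f.append g')
  | .nil, _, _, h => .inr ⟨_, h, rfl⟩
  | .cons t f, g, x, h => by
    rcases fstep_cons_inv h with ⟨t', ht, rfl⟩ | ⟨y, hy, rfl⟩
    · exact .inl ⟨.cons t' f, .head _ ht, rfl⟩
    · rcases fstep_append_inv hy with ⟨f', hf, rfl⟩ | ⟨g', hg, rfl⟩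
      · exact .inl ⟨.cons t f', .tail t hf, rfl⟩
      · exact .inr ⟨g', hg, rfl⟩

/-- singleton forest with one node -/
def wrap (b : Bool) (c : DForest) : DForest := .cons (.node b c) .nil

theorem wrap_inj {b b' : Bool} {c c' : DForest} (h : wrap b c = wrap b' c') :
    b = b' ∧ c = c' := by
  simpa [wrap] using h

theorem FLe.refl' (f : DForest) : FLe f f := Relation.ReflTransGen.refl

theorem FLe.trans' {f g h : DForest} (h1 : FLe f g) (h2 : FLe g h) : FLe f h :=
  Relation.ReflTransGen.trans h1 h2

theorem FLe.wrap {b : Bool} {c c' : DForest} (h : FLe c c') : FLe (wrap b c) (wrap b c') :=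
  Relation.ReflTransGen.lift (fun c => _root_.wrap b c) (fun _ _ (hs : FStep _ _) => FStep.head _ (.congr b hs)) _ _ h

theorem FLe.append {f f' g g' : DForest} (hf : FLe f f') (hg : FLe g g') :
    FLe (f.append g) (f'.append g') := by
  have h1 : FLe (f.append g) (f'.append g) :=
    Relation.ReflTransGen.lift (fun x => DForest.append x g) (fun _ _ (hs : FStep _ _) => hs.append_left g) _ _ hf
  have h2 : FLe (f'.append g) (f'.append g') :=
    Relation.ReflTransGen.lift (fun x => DForest.append f' x) (fun _ _ (hs : FStep _ _) => hs.append_right f') _ _ hg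
  exact h1.trans' h2

theorem fle_nil_inv {x : DForest} (h : FLe .nil x) : x = .nil := by
  induction h with
  | refl => rfl
  | tail _ hs ih => subst ih; exact absurd hs (fun h => h.nil_elim)

theorem fle_white_inv {c x : DForest} (h : FLe (wrap false c) x) :
    (∃ c', x = wrap false c' ∧ FLe c c') ∨
    (∃ f g, x = wrap true (f.append g) ∧ f.len = c.len ∧ FLe c f ∧ FLe c g) := by
  induction h with
  | refl => exact .inl ⟨c, rfl, .refl' c⟩
  | tail _ hs ih =>
    rcases ih with ⟨c', rfl, hc⟩ | ⟨f, g, rfl, hlen, hf, hg⟩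
    · rcases fstep_cons_inv hs with ⟨t', ht, rfl⟩ | ⟨y, hy, _⟩
      · rcases tstep_inv ht with ⟨_, rfl⟩ | ⟨c'', hc'', rfl⟩
        · exact .inr ⟨c', c', rfl, hc.len_eq.symm, hc, hc⟩
        · exact .inl ⟨c'', rfl, hc.tail hc''⟩
      · exact absurd hy (fun h => h.nil_elim)
    · rcases fstep_cons_inv hs with ⟨t', ht, rfl⟩ | ⟨y, hy, _⟩
      · rcases tstep_inv ht with ⟨hb, _⟩ | ⟨c'', hc'', rfl⟩
        · exact absurd hb (by simp)
        · rcases fstep_append_inv hc'' with ⟨f', hf', rfl⟩ | ⟨g', hg', rfl⟩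
          · exact .inr ⟨f', g, rfl, hf'.len_eq ▸ hlen, hf.tail hf', hg⟩
          · exact .inr ⟨f, g', rfl, hlen, hf, hg.tail hg'⟩
      · exact absurd hy (fun h => h.nil_elim)

theorem fle_black_inv {c x : DForest} (h : FLe (wrap true c) x) :
    ∃ c', x = wrap true c' ∧ FLe c c' := by
  induction h with
  | refl => exact ⟨c, rfl, .refl' c⟩
  | tail _ hs ih =>
    obtain ⟨c', rfl, hc⟩ := ih
    rcases fstep_cons_inv hs with ⟨t', ht, rfl⟩ | ⟨y, hy, _⟩
    · rcases tstep_inv ht with ⟨hb, _⟩ | ⟨c'', hc'', rfl⟩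
      · exact absurd hb (by simp)
      · exact ⟨c'', rfl, hc.tail hc''⟩
    · exact absurd hy (fun h => h.nil_elim)

theorem fle_append_inv {f g x : DForest} (h : FLe (f.append g) x) :
    ∃ f' g', x = f'.append g' ∧ f'.len = f.len ∧ FLe f f' ∧ FLe g g' := by
  induction h with
  | refl => exact ⟨f, g, rfl, rfl, .refl' f, .refl' g⟩
  | tail _ hs ih =>
    obtain ⟨f', g', rfl, hlen, hf, hg⟩ := ih
    rcases fstep_append_inv hs with ⟨f'', hf'', rfl⟩ | ⟨g'', hg'', rfl⟩
    · exact ⟨f'', g', rfl, hf''.len_eq ▸ hlen, hf.tail hf'', hg⟩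
    · exact ⟨f', g'', rfl, hlen, hf, hg.tail hg''⟩

theorem not_fle_black_white {c c' : DForest} (h : FLe (wrap true c) (wrap false c')) : False := by
  obtain ⟨c'', he, _⟩ := fle_black_inv h
  exact absurd (wrap_inj he.symm).1 (by simp)

theorem fle_white_white {c c' : DForest} : FLe (wrap false c) (wrap false c') ↔ FLe c c' := by
  constructor
  · intro h
    rcases fle_white_inv h with ⟨c'', he, hc⟩ | ⟨f, g, he, _, _, _⟩
    · obtain rfl := (wrap_inj he).2; exact hc
    · exact absurd (wrap_inj he).1 (by simp)
  · exact FLe.wrap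

theorem fle_white_black {c f g : DForest} (hlf : f.len = c.len) :
    FLe (wrap false c) (wrap true (f.append g)) ↔ FLe c f ∧ FLe c g := by
  constructor
  · intro h
    rcases fle_white_inv h with ⟨c'', he, _⟩ | ⟨f', g', he, hlen, hf, hg⟩
    · exact absurd (wrap_inj he).1 (by simp)
    · obtain ⟨rfl, rfl⟩ := DForest.append_inj _ _ (wrap_inj he).2 (by omega)
      exact ⟨hf, hg⟩
  · rintro ⟨hf, hg⟩
    exact FLe.trans' (Relation.ReflTransGen.single (.head _ (.dup c)))
      ((hf.append hg).wrap (b := true))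

theorem fle_black_black {f g f' g' : DForest} (hl : f'.len = f.len) :
    FLe (wrap true (f.append g)) (wrap true (f'.append g')) ↔ FLe f f' ∧ FLe g g' := by
  constructor
  · intro h
    obtain ⟨c', he, hc⟩ := fle_black_inv h
    obtain rfl := (wrap_inj he).2
    obtain ⟨f'', g'', he', hlen, hf, hg⟩ := fle_append_inv hc
    obtain ⟨rfl, rfl⟩ := DForest.append_inj _ _ he'.symm (by omega)
    exact ⟨hf, hg⟩
  · rintro ⟨hf, hg⟩
    exact (hf.append hg).wrap

/-- Explicit finite set of forests reachable from the d-ladder. -/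
def Ld : ℕ → Finset DForest
  | 0 => {.nil}
  | d + 1 => (Ld d).image (wrap false) ∪
      ((Ld d) ×ˢ (Ld d)).image (fun p => wrap true (p.1.append p.2))

theorem mem_Ld_succ {d : ℕ} {x : DForest} : x ∈ Ld (d + 1) ↔
    (∃ c ∈ Ld d, x = wrap false c) ∨ (∃ f ∈ Ld d, ∃ g ∈ Ld d, x = wrap true (f.append g)) := by
  simp only [Ld, Finset.mem_union, Finset.mem_image, Finset.mem_product, Prod.exists]
  constructor
  · rintro (⟨c, hc, rfl⟩ | ⟨f, g, ⟨hf, hg⟩, rfl⟩)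
    · exact .inl ⟨c, hc, rfl⟩
    · exact .inr ⟨f, hf, g, hg, rfl⟩
  · rintro (⟨c, hc, rfl⟩ | ⟨f, hf, g, hg, rfl⟩)
    · exact .inl ⟨c, hc, rfl⟩
    · exact .inr ⟨f, g, ⟨hf, hg⟩, rfl⟩

theorem ladder_mem : ∀ d : ℕ, ladder d ∈ Ld d
  | 0 => by simp [Ld, ladder]
  | d + 1 => mem_Ld_succ.mpr (.inl ⟨ladder d, ladder_mem d, rfl⟩)

theorem Ld_reaches : ∀ (d : ℕ) {f : DForest}, f ∈ Ld d → FLe (ladder d) f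
  | 0, f, hf => by
      simp only [Ld, Finset.mem_singleton] at hf
      exact hf ▸ .refl' _
  | d + 1, x, hx => by
      rcases mem_Ld_succ.mp hx with ⟨c, hc, rfl⟩ | ⟨f, hf, g, hg, rfl⟩
      · exact (fle_white_white (c := ladder d)).mpr (Ld_reaches d hc)
      · have h1 := Ld_reaches d hf
        have h2 := Ld_reaches d hg
        exact (fle_white_black h1.len_eq.symm).mpr ⟨h1, h2⟩

theorem Ld_len {d : ℕ} {f : DForest} (hf : f ∈ Ld d) : f.len = (ladder d).len :=
  (Ld_reaches d hf).len_eq.symm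

theorem Ld_closed : ∀ (d : ℕ) {f g : DForest}, f ∈ Ld d → FStep f g → g ∈ Ld d
  | 0, f, g, hf, hs => by
      simp only [Ld, Finset.mem_singleton] at hf
      subst hf
      exact absurd hs (fun h => h.nil_elim)
  | d + 1, x, y, hx, hs => by
      rcases mem_Ld_succ.mp hx with ⟨c, hc, rfl⟩ | ⟨f, hf, g, hg, rfl⟩
      · rcases fstep_cons_inv hs with ⟨t', ht, rfl⟩ | ⟨z, hz, _⟩
        · rcases tstep_inv ht with ⟨_, rfl⟩ | ⟨c', hc', rfl⟩
          · exact mem_Ld_succ.mpr (.inr ⟨c, hc, c, hc, rfl⟩)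
          · exact mem_Ld_succ.mpr (.inl ⟨c', Ld_closed d hc hc', rfl⟩)
        · exact absurd hz (fun h => h.nil_elim)
      · rcases fstep_cons_inv hs with ⟨t', ht, rfl⟩ | ⟨z, hz, _⟩
        · rcases tstep_inv ht with ⟨hb, _⟩ | ⟨c', hc', rfl⟩
          · exact absurd hb (by simp)
          · rcases fstep_append_inv hc' with ⟨f', hf', rfl⟩ | ⟨g', hg', rfl⟩
            · exact mem_Ld_succ.mpr (.inr ⟨f', Ld_closed d hf hf', g, hg, rfl⟩)
            · exact mem_Ld_succ.mpr (.inr ⟨f, hf, g', Ld_closed d hg hg', rfl⟩)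
        · exact absurd hz (fun h => h.nil_elim)

theorem reach_iff {d : ℕ} {f : DForest} : FLe (ladder d) f ↔ f ∈ Ld d := by
  constructor
  · intro h
    induction h with
    | refl => exact ladder_mem d
    | tail _ hs ih => exact Ld_closed d ih hs
  · exact Ld_reaches d

theorem Ld_card : ∀ d : ℕ, (Ld d).card = seqB d
  | 0 => by simp [Ld, seqB]
  | d + 1 => by
      have hinj : Set.InjOn (fun p : DForest × DForest => wrap true (p.1.append p.2))
          ((Ld d) ×ˢ (Ld d) : Finset (DForest × DForest)) := by
        rintro ⟨f, g⟩ hfg ⟨f', g'⟩ hfg' h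
        simp only [Finset.coe_product, Set.mem_prod, Finset.mem_coe] at hfg hfg'
        obtain ⟨rfl, rfl⟩ := DForest.append_inj _ _ (wrap_inj h).2
          ((Ld_len hfg.1).trans (Ld_len hfg'.1).symm)
        rfl
      have hdisj : Disjoint ((Ld d).image (wrap false))
          (((Ld d) ×ˢ (Ld d)).image (fun p : DForest × DForest => wrap true (p.1.append p.2))) := by
        rw [Finset.disjoint_left]
        intro x hx hx'
        simp only [Finset.mem_image, Prod.exists] at hx hx'
        obtain ⟨c, _, rfl⟩ := hx
        obtain ⟨f, g, _, h⟩ := hx'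
        exact absurd (wrap_inj h.symm).1 (by simp)
      rw [Ld, Finset.card_union_of_disjoint hdisj, Finset.card_image_of_injective _
        (fun a b h => (wrap_inj h).2), Finset.card_image_of_injOn hinj, Finset.card_product,
        Ld_card d, seqB]
      ring

/-- The Hasse-edge predicate from the theorem statement. -/
def IsEdge (d : ℕ) (p : DForest × DForest) : Prop :=
  FLe (ladder d) p.1 ∧ FLe p.1 p.2 ∧ p.1 ≠ p.2 ∧
    ∀ h : DForest, FLe p.1 h → FLe h p.2 → h = p.1 ∨ h = p.2

/-- Explicit finite set of Hasse edges. -/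
def Ed : ℕ → Finset (DForest × DForest)
  | 0 => ∅
  | d + 1 =>
      ((Ed d).image (fun p => (wrap false p.1, wrap false p.2)) ∪
       (Ld d).image (fun c => (wrap false c, wrap true (c.append c)))) ∪
      (((Ed d) ×ˢ (Ld d)).image
          (fun q => (wrap true (q.1.1.append q.2), wrap true (q.1.2.append q.2))) ∪
       ((Ld d) ×ˢ (Ed d)).image
          (fun q => (wrap true (q.1.append q.2.1), wrap true (q.1.append q.2.2))))

theorem mem_Ed_succ {d : ℕ} {p : DForest × DForest} : p ∈ Ed (d + 1) ↔
    (∃ a b, (a, b) ∈ Ed d ∧ p = (wrap false a, wrap false b)) ∨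
    (∃ c ∈ Ld d, p = (wrap false c, wrap true (c.append c))) ∨
    (∃ a b, (a, b) ∈ Ed d ∧ ∃ g ∈ Ld d,
        p = (wrap true (a.append g), wrap true (b.append g))) ∨
    (∃ a b, (a, b) ∈ Ed d ∧ ∃ g ∈ Ld d,
        p = (wrap true (g.append a), wrap true (g.append b))) := by
  simp only [Ed, Finset.mem_union, Finset.mem_image, Finset.mem_product, Prod.exists]
  constructor
  · rintro ((⟨a, b, hab, rfl⟩ | ⟨c, hc, rfl⟩) | (⟨a, b, g, ⟨hab, hg⟩, rfl⟩ | ⟨g, a, b, ⟨hg, hab⟩, rfl⟩))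
    · exact .inl ⟨a, b, hab, rfl⟩
    · exact .inr (.inl ⟨c, hc, rfl⟩)
    · exact .inr (.inr (.inl ⟨a, b, hab, g, hg, rfl⟩))
    · exact .inr (.inr (.inr ⟨a, b, hab, g, hg, rfl⟩))
  · rintro (⟨a, b, hab, rfl⟩ | ⟨c, hc, rfl⟩ | ⟨a, b, hab, g, hg, rfl⟩ | ⟨a, b, hab, g, hg, rfl⟩)
    · exact .inl (.inl ⟨a, b, hab, rfl⟩)
    · exact .inl (.inr ⟨c, hc, rfl⟩)
    · exact .inr (.inl ⟨a, b, g, ⟨hab, hg⟩, rfl⟩)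
    · exact .inr (.inr ⟨g, a, b, ⟨hg, hab⟩, rfl⟩)

theorem isEdge_iff {d : ℕ} {a b : DForest} : IsEdge d (a, b) ↔
    (FLe (ladder d) a ∧ FLe a b ∧ a ≠ b ∧
      ∀ h : DForest, FLe a h → FLe h b → h = a ∨ h = b) := Iff.rfl

theorem Ed_iff : ∀ (d : ℕ) (p : DForest × DForest), p ∈ Ed d ↔ IsEdge d p
  | 0, p => by
      obtain ⟨p1, p2⟩ := p
      simp only [Ed, Finset.notMem_empty, false_iff, isEdge_iff, ladder]
      rintro ⟨hr1, hr2, hne, -⟩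
      obtain rfl := fle_nil_inv hr1
      obtain rfl := fle_nil_inv hr2
      exact hne rfl
  | d + 1, p => by
      have IH := Ed_iff d
      constructor
      · intro hp
        rcases mem_Ed_succ.mp hp with ⟨a, b, hab, rfl⟩ | ⟨c, hc, rfl⟩ |
          ⟨a, b, hab, g, hg, rfl⟩ | ⟨a, b, hab, g, hg, rfl⟩
        · -- white-white edge
          obtain ⟨r1, r2, r3, r4⟩ := isEdge_iff.mp ((IH _).mp hab)
          rw [isEdge_iff]
          refine ⟨(fle_white_white (c := ladder d)).mpr r1, fle_white_white.mpr r2,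
            fun he => r3 (wrap_inj he).2, ?_⟩
          intro h hh1 hh2
          rcases fle_white_inv hh1 with ⟨c', rfl, hc'⟩ | ⟨u, v, rfl, -, -, -⟩
          · rcases r4 c' hc' (fle_white_white.mp hh2) with rfl | rfl
            · exact .inl rfl
            · exact .inr rfl
          · exact absurd hh2 not_fle_black_white
        · -- duplication edge
          have rc := Ld_reaches d hc
          rw [isEdge_iff]
          refine ⟨(fle_white_white (c := ladder d)).mpr rc,
            Relation.ReflTransGen.single (.head _ (.dup c)),
            fun he => by simpa using (wrap_inj he).1, ?_⟩
          intro h hh1 hh2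
          rcases fle_white_inv hh1 with ⟨c', rfl, hc'⟩ | ⟨u, v, rfl, hlen, hu, hv⟩
          · left
            obtain ⟨h1, -⟩ := (fle_white_black hc'.len_eq).mp hh2
            rw [hc'.antisymm h1]
          · right
            obtain ⟨h1, h2⟩ := (fle_black_black (by omega)).mp hh2
            obtain rfl := hu.antisymm h1
            obtain rfl := hv.antisymm h2
            rfl
        · -- left black edge
          obtain ⟨r1, r2, r3, r4⟩ := isEdge_iff.mp ((IH _).mp hab)
          have ha : a ∈ Ld d := reach_iff.mp r1
          have hb : b ∈ Ld d := reach_iff.mp (r1.trans' r2)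
          have hlab : b.len = a.len := (Ld_len hb).trans (Ld_len ha).symm
          rw [isEdge_iff]
          refine ⟨reach_iff.mpr (mem_Ld_succ.mpr (.inr ⟨a, ha, g, hg, rfl⟩)),
            (fle_black_black hlab).mpr ⟨r2, .refl' g⟩, ?_, ?_⟩
          · intro he
            exact r3 (DForest.append_inj _ _ (wrap_inj he).2 hlab.symm).1
          · intro h hh1 hh2
            obtain ⟨c', rfl, hcc⟩ := fle_black_inv hh1
            obtain ⟨u, v, rfl, hlen, hu, hvv⟩ := fle_append_inv hcc
            obtain ⟨h1, h2⟩ := (fle_black_black (hlab.trans hlen.symm)).mp hh2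
            obtain rfl := hvv.antisymm h2
            rcases r4 u hu h1 with rfl | rfl
            · exact .inl rfl
            · exact .inr rfl
        · -- right black edge
          obtain ⟨r1, r2, r3, r4⟩ := isEdge_iff.mp ((IH _).mp hab)
          have ha : a ∈ Ld d := reach_iff.mp r1
          have hb : b ∈ Ld d := reach_iff.mp (r1.trans' r2)
          rw [isEdge_iff]
          refine ⟨reach_iff.mpr (mem_Ld_succ.mpr (.inr ⟨g, hg, a, ha, rfl⟩)),
            (fle_black_black rfl).mpr ⟨.refl' g, r2⟩, ?_, ?_⟩
          · intro he
            exact r3 (DForest.append_inj _ _ (wrap_inj he).2 rfl).2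
          · intro h hh1 hh2
            obtain ⟨c', rfl, hcc⟩ := fle_black_inv hh1
            obtain ⟨u, v, rfl, hlen, hu, hvv⟩ := fle_append_inv hcc
            obtain ⟨h1, h2⟩ := (fle_black_black hlen.symm).mp hh2
            obtain rfl := hu.antisymm h1
            rcases r4 v hvv h2 with rfl | rfl
            · exact .inl rfl
            · exact .inr rfl
      · intro hP
        obtain ⟨p1, p2⟩ := p
        obtain ⟨r1, r2, r3, r4⟩ := isEdge_iff.mp hP
        have h1 : p1 ∈ Ld (d + 1) := reach_iff.mp r1
        have h2 : p2 ∈ Ld (d + 1) := reach_iff.mp (r1.trans' r2)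
        rcases mem_Ld_succ.mp h1 with ⟨c, hc, rfl⟩ | ⟨f, hf, g, hg, rfl⟩
        · rcases mem_Ld_succ.mp h2 with ⟨c', hc', rfl⟩ | ⟨f, hf, g, hg, rfl⟩
          · -- white to white
            refine mem_Ed_succ.mpr (.inl ⟨c, c', (IH _).mpr (isEdge_iff.mpr
              ⟨Ld_reaches d hc, fle_white_white.mp r2, fun he => r3 (by rw [he]), ?_⟩), rfl⟩)
            intro h' hA hB
            rcases r4 (wrap false h') (fle_white_white.mpr hA) (fle_white_white.mpr hB)
              with he | he
            · exact .inl (wrap_inj he).2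
            · exact .inr (wrap_inj he).2
          · -- white to black
            have hlen : f.len = c.len := (Ld_len hf).trans (Ld_len hc).symm
            obtain ⟨hcf, hcg⟩ := (fle_white_black hlen).mp r2
            have hmid1 : FLe (wrap false c) (wrap true (c.append c)) :=
              Relation.ReflTransGen.single (.head _ (.dup c))
            have hmid2 : FLe (wrap true (c.append c)) (wrap true (f.append g)) :=
              (fle_black_black hlen).mpr ⟨hcf, hcg⟩
            rcases r4 _ hmid1 hmid2 with he | he
            · exact absurd (wrap_inj he).1 (by simp)
            · obtain ⟨rfl, rfl⟩ := DForest.append_inj _ _ (wrap_inj he).2 hlen.symm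
              exact mem_Ed_succ.mpr (.inr (.inl ⟨c, hc, rfl⟩))
        · rcases mem_Ld_succ.mp h2 with ⟨c', hc', rfl⟩ | ⟨u, hu, v, hv, rfl⟩
          · exact absurd r2 not_fle_black_white
          · have hlen_uf : u.len = f.len := (Ld_len hu).trans (Ld_len hf).symm
            obtain ⟨hfu, hgv⟩ := (fle_black_black hlen_uf).mp r2
            have hm1 : FLe (wrap true (f.append g)) (wrap true (u.append g)) :=
              (fle_black_black hlen_uf).mpr ⟨hfu, .refl' g⟩
            have hm2 : FLe (wrap true (u.append g)) (wrap true (u.append v)) :=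
              (fle_black_black rfl).mpr ⟨.refl' u, hgv⟩
            rcases r4 _ hm1 hm2 with he | he
            · -- u = f: edge in right component
              obtain ⟨rfl, -⟩ := DForest.append_inj _ _ (wrap_inj he).2 hlen_uf
              refine mem_Ed_succ.mpr (.inr (.inr (.inr ⟨g, v, (IH _).mpr (isEdge_iff.mpr
                ⟨Ld_reaches d hg, hgv, ?_, ?_⟩), u, hu, rfl⟩)))
              · rintro rfl; exact r3 rfl
              · intro h' hA hB
                have hm : FLe (wrap true (u.append g)) (wrap true (u.append h')) :=
                  (fle_black_black rfl).mpr ⟨.refl' u, hA⟩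
                have hm' : FLe (wrap true (u.append h')) (wrap true (u.append v)) :=
                  (fle_black_black rfl).mpr ⟨.refl' u, hB⟩
                rcases r4 _ hm hm' with he2 | he2
                · exact .inl (DForest.append_inj _ _ (wrap_inj he2).2 rfl).2
                · exact .inr (DForest.append_inj _ _ (wrap_inj he2).2 rfl).2
            · -- g = v: edge in left component
              obtain ⟨-, rfl⟩ := DForest.append_inj _ _ (wrap_inj he).2 rfl
              refine mem_Ed_succ.mpr (.inr (.inr (.inl ⟨f, u, (IH _).mpr (isEdge_iff.mpr
                ⟨Ld_reaches d hf, hfu, ?_, ?_⟩), g, hg, rfl⟩)))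
              · rintro rfl; exact r3 rfl
              · intro h' hA hB
                have hm : FLe (wrap true (f.append g)) (wrap true (h'.append g)) :=
                  (fle_black_black hA.len_eq.symm).mpr ⟨hA, .refl' g⟩
                have hm' : FLe (wrap true (h'.append g)) (wrap true (u.append g)) :=
                  (fle_black_black (hlen_uf.trans hA.len_eq)).mpr ⟨hB, .refl' g⟩
                rcases r4 _ hm hm' with he2 | he2
                · exact .inl (DForest.append_inj _ _ (wrap_inj he2).2 hA.len_eq.symm).1
                · exact .inr (DForest.append_inj _ _ (wrap_inj he2).2
                    (hA.len_eq.symm.trans hlen_uf.symm)).1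

theorem Ed_spec {d : ℕ} {q : DForest × DForest} (hq : q ∈ Ed d) :
    q.1 ∈ Ld d ∧ q.2 ∈ Ld d ∧ q.1 ≠ q.2 := by
  obtain ⟨r1, r2, r3, -⟩ := (Ed_iff d q).mp hq
  exact ⟨reach_iff.mp r1, reach_iff.mp (r1.trans' r2), r3⟩

theorem Ed_card : ∀ d : ℕ, (Ed d).card = seqC d
  | 0 => by simp [Ed, seqC]
  | d + 1 => by
      have cardA : ((Ed d).image (fun p => (wrap false p.1, wrap false p.2))).card
          = (Ed d).card := by
        apply Finset.card_image_of_injective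
        rintro ⟨a, b⟩ ⟨a', b'⟩ h
        have h1 := (wrap_inj (congrArg Prod.fst h)).2
        have h2 := (wrap_inj (congrArg Prod.snd h)).2
        simp_all
      have cardB : ((Ld d).image (fun c => (wrap false c, wrap true (c.append c)))).card
          = (Ld d).card := by
        apply Finset.card_image_of_injective
        intro c c' h
        exact (wrap_inj (congrArg Prod.fst h)).2
      have cardC : (((Ed d) ×ˢ (Ld d)).image
          (fun q => (wrap true (q.1.1.append q.2), wrap true (q.1.2.append q.2)))).card
          = (Ed d).card * (Ld d).card := by
        rw [Finset.card_image_of_injOn, Finset.card_product]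
        rintro ⟨⟨a, b⟩, g⟩ hm ⟨⟨a', b'⟩, g'⟩ hm' h
        simp only [Finset.coe_product, Set.mem_prod, Finset.mem_coe] at hm hm'
        have e1 := (wrap_inj (congrArg Prod.fst h)).2
        have e2 := (wrap_inj (congrArg Prod.snd h)).2
        obtain ⟨ha, hb, -⟩ := Ed_spec hm.1
        obtain ⟨ha', hb', -⟩ := Ed_spec hm'.1
        obtain ⟨rfl, rfl⟩ := DForest.append_inj _ _ e1 ((Ld_len ha).trans (Ld_len ha').symm)
        obtain ⟨rfl, -⟩ := DForest.append_inj _ _ e2 ((Ld_len hb).trans (Ld_len hb').symm)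
        rfl
      have cardD : (((Ld d) ×ˢ (Ed d)).image
          (fun q => (wrap true (q.1.append q.2.1), wrap true (q.1.append q.2.2)))).card
          = (Ld d).card * (Ed d).card := by
        rw [Finset.card_image_of_injOn, Finset.card_product]
        rintro ⟨g, a, b⟩ hm ⟨g', a', b'⟩ hm' h
        simp only [Finset.coe_product, Set.mem_prod, Finset.mem_coe] at hm hm'
        have e1 := (wrap_inj (congrArg Prod.fst h)).2
        have e2 := (wrap_inj (congrArg Prod.snd h)).2
        obtain ⟨rfl, rfl⟩ := DForest.append_inj _ _ e1 ((Ld_len hm.1).trans (Ld_len hm'.1).symm)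
        obtain ⟨-, rfl⟩ := DForest.append_inj _ _ e2 rfl
        rfl
      have hAB : Disjoint ((Ed d).image (fun p => (wrap false p.1, wrap false p.2)))
          ((Ld d).image (fun c => (wrap false c, wrap true (c.append c)))) := by
        rw [Finset.disjoint_left]
        intro x hx hx'
        simp only [Finset.mem_image, Prod.exists] at hx hx'
        obtain ⟨a, b, -, rfl⟩ := hx
        obtain ⟨c, -, h⟩ := hx'
        exact absurd (wrap_inj (congrArg Prod.snd h).symm).1 (by simp)
      have hCD : Disjoint (((Ed d) ×ˢ (Ld d)).image
            (fun q => (wrap true (q.1.1.append q.2), wrap true (q.1.2.append q.2))))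
          (((Ld d) ×ˢ (Ed d)).image
            (fun q => (wrap true (q.1.append q.2.1), wrap true (q.1.append q.2.2)))) := by
        rw [Finset.disjoint_left]
        intro x hx hx'
        simp only [Finset.mem_image, Finset.mem_product, Prod.exists] at hx hx'
        obtain ⟨a, b, g, ⟨hab, hg⟩, rfl⟩ := hx
        obtain ⟨g', a', b', ⟨hg', hab'⟩, h⟩ := hx'
        obtain ⟨ha, hb, hne⟩ := Ed_spec hab
        have e1 := (wrap_inj (congrArg Prod.fst h).symm).2
        have e2 := (wrap_inj (congrArg Prod.snd h).symm).2
        obtain ⟨rfl, rfl⟩ := DForest.append_inj _ _ e1 ((Ld_len ha).trans (Ld_len hg').symm)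
        obtain ⟨he, -⟩ := DForest.append_inj _ _ e2 ((Ld_len hb).trans (Ld_len hg').symm)
        exact hne (by rw [he])
      have hbig : Disjoint
          (((Ed d).image (fun p => (wrap false p.1, wrap false p.2))) ∪
            ((Ld d).image (fun c => (wrap false c, wrap true (c.append c)))))
          ((((Ed d) ×ˢ (Ld d)).image
              (fun q => (wrap true (q.1.1.append q.2), wrap true (q.1.2.append q.2)))) ∪
            (((Ld d) ×ˢ (Ed d)).image
              (fun q => (wrap true (q.1.append q.2.1), wrap true (q.1.append q.2.2))))) := by
        rw [Finset.disjoint_left]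
        intro x hx hx'
        simp only [Finset.mem_union, Finset.mem_image, Finset.mem_product, Prod.exists]
          at hx hx'
        have hwhite : ∃ c, x.1 = wrap false c := by
          rcases hx with ⟨a, b, -, rfl⟩ | ⟨c, -, rfl⟩
          · exact ⟨a, rfl⟩
          · exact ⟨c, rfl⟩
        have hblack : ∃ c, x.1 = wrap true c := by
          rcases hx' with ⟨a, b, g, -, rfl⟩ | ⟨g, a, b, -, rfl⟩
          · exact ⟨a.append g, rfl⟩
          · exact ⟨g.append a, rfl⟩
        obtain ⟨c, hc⟩ := hwhite
        obtain ⟨c', hc'⟩ := hblack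
        exact absurd (wrap_inj (hc.symm.trans hc')).1 (by simp)
      rw [Ed, Finset.card_union_of_disjoint hbig, Finset.card_union_of_disjoint hAB,
        Finset.card_union_of_disjoint hCD, cardA, cardB, cardC, cardD, Ed_card d,
        Ld_card d, seqC]
      ring


/-- The number of covering relations (Hasse diagram edges) of the poset D*(l_d)
equals c(d); the first values of these edge counts, starting with the Hasse diagram of
the Mockingbird lattice M(0) (which corresponds to D*(l_{d-1}), whence the shift), are
0, 0, 1, 7, 97, 8287, i.e. c(0) = 0, c(1) = 1, c(2) = 7, c(3) = 97, c(4) = 8287. -/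
theorem ladder_hasse_edges :
    (∀ d : ℕ,
      Nat.card {p : DForest × DForest //
        FLe (ladder d) p.1 ∧ FLe p.1 p.2 ∧ p.1 ≠ p.2 ∧
        ∀ h : DForest, FLe p.1 h → FLe h p.2 → h = p.1 ∨ h = p.2} = seqC d) ∧
    seqC 0 = 0 ∧ seqC 1 = 1 ∧ seqC 2 = 7 ∧ seqC 3 = 97 ∧ seqC 4 = 8287 := by
  constructor
  · intro d
    show Nat.card {p : DForest × DForest // IsEdge d p} = seqC d
    rw [Nat.card_congr (Equiv.subtypeEquivRight (q := fun p => p ∈ Ed d)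
      (fun p => (Ed_iff d p).symm))]
    rw [Nat.card_eq_fintype_card, Fintype.card_coe, Ed_card]
  · refine ⟨rfl, ?_, ?_, ?_, ?_⟩ <;> norm_num [seqC, seqB]
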